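/- Let A be a three-dimensional cubic regular Z-algebra over a field k, i.e. a connected Z-algebra such that each simple module S_i admits a minimal projective resolution 0 → P_{i+4} → P_{i+3}^2 → P_{i+1}^2 → P_i → S_i → 0. Then dim_k A_{i,i+n} = 0 for n < 0, dim_k A_{i,i+n} = (k+1)^2 if n = 2k ≥ 0, and dim_k A_{i,i+n} = (k+1)(k+2) if n = 2k+1 ≥ 0. -/
import Mathlib

open Module

/-- Closed form for the Hilbert function. -/
def cubicG (n : ℕ) : ℕ := (n / 2 + 1) * ((n + 1) / 2 + 1)

lemma cubicG_even (k : ℕ) : cubicG (2 * k) = (k + 1) * (k + 1) := by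
  have h1 : 2 * k / 2 = k := by omega
  have h2 : (2 * k + 1) / 2 = k := by omega
  simp [cubicG, h1, h2]

lemma cubicG_odd (k : ℕ) : cubicG (2 * k + 1) = (k + 1) * (k + 2) := by
  have h1 : (2 * k + 1) / 2 = k := by omega
  have h2 : (2 * k + 1 + 1) / 2 = k + 1 := by omega
  simp [cubicG, h1, h2]

lemma cubicG_rec (n : ℕ) :
    cubicG (n + 4) + 2 * cubicG (n + 1) = 2 * cubicG (n + 3) + cubicG n := by
  rcases Nat.even_or_odd n with ⟨k, hk⟩ | ⟨k, hk⟩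
  · subst hk
    have e1 : k + k + 4 = 2 * (k + 2) := by ring
    have e2 : k + k + 1 = 2 * k + 1 := by ring
    have e3 : k + k + 3 = 2 * (k + 1) + 1 := by ring
    have e4 : k + k = 2 * k := by ring
    rw [e1, e2, e3, e4, cubicG_even, cubicG_odd, cubicG_odd, cubicG_even]
    ring
  · subst hk
    have e1 : 2 * k + 1 + 4 = 2 * (k + 2) + 1 := by ring
    have e2 : 2 * k + 1 + 1 = 2 * (k + 1) := by ring
    have e3 : 2 * k + 1 + 3 = 2 * (k + 2) := by ring
    rw [e1, e2, e3, cubicG_odd, cubicG_even, cubicG_even, cubicG_odd]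
    ring

theorem cubic_regular_hilbert_function
    (K : Type) [Field K]
    (A : ℤ → ℤ → Type)
    [∀ i j, AddCommGroup (A i j)] [∀ i j, Module K (A i j)]
    (hfd : ∀ i j, FiniteDimensional K (A i j))
    (hconn : ∀ i, finrank K (A i i) = 1)
    (hpos : ∀ i j : ℤ, j < i → Subsingleton (A i j))
    (hres : ∀ i j : ℤ,
      ∃ (f : A (i + 4) j →ₗ[K] (Fin 2 → A (i + 3) j))
        (g : (Fin 2 → A (i + 3) j) →ₗ[K] (Fin 2 → A (i + 1) j))
        (h : (Fin 2 → A (i + 1) j) →ₗ[K] A i j),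
        Function.Injective f ∧ Function.Exact f g ∧ Function.Exact g h ∧
        (j ≠ i → Function.Surjective h) ∧ (j = i → h = 0)) :
    (∀ (i : ℤ) (n : ℤ), n < 0 → finrank K (A i (i + n)) = 0) ∧
    (∀ (i : ℤ) (m : ℕ), finrank K (A i (i + 2 * (m : ℤ))) = (m + 1) ^ 2) ∧
    (∀ (i : ℤ) (m : ℕ), finrank K (A i (i + (2 * (m : ℤ) + 1))) = (m + 1) * (m + 2)) := by
  -- finrank of a `Fin 2`-indexed function space
  have hpi : ∀ i j : ℤ, finrank K (Fin 2 → A i j) = 2 * finrank K (A i j) := by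
    intro i j
    haveI := hfd i j
    rw [Module.finrank_pi_fintype K, Finset.sum_const, Finset.card_univ]
    simp [Fintype.card_fin, two_mul]
  -- vanishing in negative degrees
  have hzero : ∀ i j : ℤ, j < i → finrank K (A i j) = 0 := by
    intro i j hij
    haveI := hpos i j hij
    exact Module.finrank_zero_of_subsingleton
  -- the key additive relation coming from the exact sequence (when j ≠ i)
  have hrec : ∀ i j : ℤ, j ≠ i →
      finrank K (A i j) + 2 * finrank K (A (i + 3) j) =
        2 * finrank K (A (i + 1) j) + finrank K (A (i + 4) j) := by
    intro i j hij
    obtain ⟨f, g, h, hf, hfg, hgh, hsurj, -⟩ := hres i j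
    haveI := fun i j => hfd i j
    haveI : FiniteDimensional K (Fin 2 → A (i + 3) j) := by infer_instance
    haveI : FiniteDimensional K (Fin 2 → A (i + 1) j) := by infer_instance
    have hkg : LinearMap.ker g = LinearMap.range f := LinearMap.exact_iff.mp hfg
    have hkh : LinearMap.ker h = LinearMap.range g := LinearMap.exact_iff.mp hgh
    have rn_g := LinearMap.finrank_range_add_finrank_ker g
    have rn_h := LinearMap.finrank_range_add_finrank_ker h
    have hrf : finrank K (LinearMap.range f) = finrank K (A (i + 4) j) :=
      LinearMap.finrank_range_of_inj hf
    have hrh : finrank K (LinearMap.range h) = finrank K (A i j) := by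
      rw [LinearMap.range_eq_top.mpr (hsurj hij), finrank_top]
    rw [hpi] at rn_g
    rw [hpi] at rn_h
    rw [hkg, hrf] at rn_g
    rw [hkh, hrh] at rn_h
    omega
  -- main induction: `finrank K (A i (i + n)) = cubicG n` for natural `n`
  have key : ∀ n : ℕ, ∀ i : ℤ, finrank K (A i (i + (n : ℤ))) = cubicG n := by
    intro n
    induction n using Nat.strong_induction_on with
    | _ n ih =>
      intro i
      match n with
      | 0 =>
        have e : (i : ℤ) + ((0 : ℕ) : ℤ) = i := by push_cast; ring
        rw [e]
        simpa [cubicG] using hconn i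
      | 1 =>
        have h1 := hrec i (i + 1) (by omega)
        have z3 : finrank K (A (i + 3) (i + 1)) = 0 := hzero _ _ (by omega)
        have z4 : finrank K (A (i + 4) (i + 1)) = 0 := hzero _ _ (by omega)
        have v1 : finrank K (A (i + 1) (i + 1)) = 1 := hconn _
        have e : (i : ℤ) + ((1 : ℕ) : ℤ) = i + 1 := by push_cast; ring
        rw [e]
        have : finrank K (A i (i + 1)) = 2 := by omega
        simpa [cubicG] using this
      | 2 =>
        have h1 := hrec i (i + 2) (by omega)
        have z3 : finrank K (A (i + 3) (i + 2)) = 0 := hzero _ _ (by omega)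
        have z4 : finrank K (A (i + 4) (i + 2)) = 0 := hzero _ _ (by omega)
        have v1 : finrank K (A (i + 1) (i + 2)) = cubicG 1 := by
          have := ih 1 (by omega) (i + 1)
          have e : (i + 1 : ℤ) + ((1 : ℕ) : ℤ) = i + 2 := by push_cast; ring
          rwa [e] at this
        have hG1 : cubicG 1 = 2 := by simp [cubicG]
        have e : (i : ℤ) + ((2 : ℕ) : ℤ) = i + 2 := by push_cast; ring
        rw [e]
        have : finrank K (A i (i + 2)) = 4 := by omega
        simpa [cubicG] using this
      | 3 =>
        have h1 := hrec i (i + 3) (by omega)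
        have z4 : finrank K (A (i + 4) (i + 3)) = 0 := hzero _ _ (by omega)
        have v3 : finrank K (A (i + 3) (i + 3)) = 1 := hconn _
        have v1 : finrank K (A (i + 1) (i + 3)) = cubicG 2 := by
          have := ih 2 (by omega) (i + 1)
          have e : (i + 1 : ℤ) + (2 : ℕ) = i + 3 := by push_cast; ring
          rwa [e] at this
        have hG2 : cubicG 2 = 4 := by simp [cubicG]
        have e2 : (i : ℤ) + ((3 : ℕ) : ℤ) = i + 3 := by push_cast; ring
        rw [e2]
        have : finrank K (A i (i + 3)) = 6 := by omega
        simpa [cubicG] using this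
      | (m + 4) =>
        have h1 := hrec i (i + ((m : ℤ) + 4)) (by omega)
        have v1 : finrank K (A (i + 1) (i + ((m : ℤ) + 4))) = cubicG (m + 3) := by
          have := ih (m + 3) (by omega) (i + 1)
          have e : (i + 1 : ℤ) + ((m + 3 : ℕ) : ℤ) = i + ((m : ℤ) + 4) := by
            push_cast; ring
          rwa [e] at this
        have v3 : finrank K (A (i + 3) (i + ((m : ℤ) + 4))) = cubicG (m + 1) := by
          have := ih (m + 1) (by omega) (i + 3)
          have e : (i + 3 : ℤ) + ((m + 1 : ℕ) : ℤ) = i + ((m : ℤ) + 4) := by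
            push_cast; ring
          rwa [e] at this
        have v4 : finrank K (A (i + 4) (i + ((m : ℤ) + 4))) = cubicG m := by
          have := ih m (by omega) (i + 4)
          have e : (i + 4 : ℤ) + (m : ℤ) = i + ((m : ℤ) + 4) := by ring
          rwa [e] at this
        have hGr := cubicG_rec m
        have e : (i : ℤ) + ((m + 4 : ℕ) : ℤ) = i + ((m : ℤ) + 4) := by push_cast; ring
        rw [e]
        omega
  refine ⟨?_, ?_, ?_⟩
  · intro i n hn
    exact hzero _ _ (by omega)
  · intro i m
    have := key (2 * m) i
    have e : (i : ℤ) + ((2 * m : ℕ) : ℤ) = i + 2 * (m : ℤ) := by push_cast; ring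
    rw [e] at this
    rw [this, cubicG_even]
    ring
  · intro i m
    have := key (2 * m + 1) i
    have e : (i : ℤ) + ((2 * m + 1 : ℕ) : ℤ) = i + (2 * (m : ℤ) + 1) := by push_cast; ring
    rw [e] at this
    rw [this, cubicG_odd]
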